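/- arXiv:2406.00812 — 4 statements merged into one kernel-verified Lean document; each statement's English description precedes it below -/
import Mathlib

section
/- Let f : ℝⁿ → ℝ be a convex function that is L-Lipschitz for some L ≥ 0. Then the Gaussian smoothing J(μ, A) := ∫ f(μ + A z) dγⁿ(z) is jointly convex as a function of (μ, A) ∈ ℝⁿ × (n×n real matrices): for all μ₁, μ₂ ∈ ℝⁿ, all n×n real matrices A₁, A₂, and all λ ∈ [0,1], J(λμ₁ + (1−λ)μ₂, λA₁ + (1−λ)A₂) ≤ λ J(μ₁, A₁) + (1−λ) J(μ₂, A₂). -/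
open Matrix MeasureTheory ProbabilityTheory

lemma aux_integrable_id_gaussian : Integrable (fun x : ℝ => x) (gaussianReal 0 1) := by
  rw [gaussianReal_of_var_ne_zero 0 one_ne_zero,
    integrable_withDensity_iff (measurable_gaussianPDF 0 1)
      (ae_of_all _ fun x => ENNReal.ofReal_lt_top)]
  have h : ∀ x : ℝ, (gaussianPDF 0 1 x).toReal = gaussianPDFReal 0 1 x :=
    fun x => ENNReal.toReal_ofReal (gaussianPDFReal_nonneg 0 1 x)
  simp_rw [h, gaussianPDFReal]
  have := (integrable_mul_exp_neg_mul_sq (show (0:ℝ) < 1/2 by norm_num)).const_mul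
    ((Real.sqrt (2 * Real.pi * 1))⁻¹)
  refine this.congr (ae_of_all _ fun x => ?_)
  push_cast
  ring_nf

lemma aux_map_eval_pi {n : ℕ} (μ : Fin n → Measure ℝ) [∀ i, IsProbabilityMeasure (μ i)]
    (j : Fin n) : Measure.map (fun z => z j) (Measure.pi μ) = μ j := by
  refine Measure.ext fun s hs => ?_
  rw [Measure.map_apply (measurable_pi_apply j) hs]
  have hp : (fun z : Fin n → ℝ => z j) ⁻¹' s
      = Set.univ.pi (Function.update (fun _ => Set.univ) j s) := Set.eval_preimage
  rw [hp, Measure.pi_pi]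
  rw [Finset.prod_eq_single j]
  · simp
  · intro i _ hij
    simp [Function.update_of_ne hij]
  · simp

lemma aux_integrable_eval {n : ℕ} (j : Fin n) :
    Integrable (fun z : Fin n → ℝ => z j)
      (Measure.pi fun _ : Fin n => gaussianReal 0 1) := by
  have h := aux_map_eval_pi (fun _ : Fin n => gaussianReal 0 1) j
  have : Integrable (fun x : ℝ => x)
      (Measure.map (fun z : Fin n → ℝ => z j) (Measure.pi fun _ : Fin n => gaussianReal 0 1)) := by
    rw [h]; exact aux_integrable_id_gaussian
  exact (integrable_map_measure aestronglyMeasurable_id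
    (measurable_pi_apply j).aemeasurable).mp this

lemma aux_integrable {n : ℕ} (f : (Fin n → ℝ) → ℝ) (L : ℝ) (hL : 0 ≤ L)
    (hlip : ∀ x y : Fin n → ℝ, |f x - f y| ≤ L * Real.sqrt (∑ i, (x i - y i) ^ 2))
    (μ : Fin n → ℝ) (A : Matrix (Fin n) (Fin n) ℝ) :
    Integrable (fun z : Fin n → ℝ => f (μ + A.mulVec z))
      (Measure.pi fun _ : Fin n => gaussianReal 0 1) := by
  -- continuity of f
  have hcont : Continuous f := by
    refine (LipschitzWith.of_dist_le_mul (K := ⟨L * Real.sqrt n, by positivity⟩)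
      fun x y => ?_).continuous
    refine (hlip x y).trans ?_
    change _ ≤ L * Real.sqrt n * dist x y
    rw [mul_assoc]
    refine mul_le_mul_of_nonneg_left ?_ hL
    rw [show (Real.sqrt n * dist x y) = Real.sqrt (n * (dist x y * dist x y)) by
      rw [Real.sqrt_mul (Nat.cast_nonneg n), Real.sqrt_mul_self dist_nonneg]]
    refine Real.sqrt_le_sqrt ?_
    have : ∀ i, (x i - y i) ^ 2 ≤ dist x y * dist x y := by
      intro i
      have h1 : |x i - y i| ≤ dist x y := by
        rw [← Real.dist_eq]; exact dist_le_pi_dist x y i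
      calc (x i - y i) ^ 2 = |x i - y i| * |x i - y i| := by
            rw [abs_mul_abs_self]; ring
        _ ≤ dist x y * dist x y := mul_le_mul h1 h1 (abs_nonneg _) dist_nonneg
    calc ∑ i, (x i - y i) ^ 2 ≤ ∑ _i : Fin n, dist x y * dist x y :=
          Finset.sum_le_sum fun i _ => this i
      _ = n * (dist x y * dist x y) := by rw [Finset.sum_const]; simp [mul_comm]
  have hmv : Continuous fun z : Fin n → ℝ => A.mulVec z := by
    have := A.mulVecLin.continuous_of_finiteDimensional
    exact this
  have hmeas : AEStronglyMeasurable (fun z : Fin n → ℝ => f (μ + A.mulVec z))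
      (Measure.pi fun _ : Fin n => gaussianReal 0 1) :=
    (hcont.comp (continuous_const.add hmv)).aestronglyMeasurable
  -- dominating function
  set g : (Fin n → ℝ) → ℝ :=
    fun z => |f 0| + L * ∑ i, (|μ i| + ∑ j, |A i j| * |z j|) with hg
  have hgint : Integrable g (Measure.pi fun _ : Fin n => gaussianReal 0 1) := by
    refine (integrable_const _).add (Integrable.const_mul ?_ L)
    refine integrable_finset_sum _ fun i _ => (integrable_const _).add ?_
    exact integrable_finset_sum _ fun j _ =>
      ((aux_integrable_eval j).abs).const_mul _
  refine hgint.mono' hmeas (ae_of_all _ fun z => ?_)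
  rw [Real.norm_eq_abs]
  set w := μ + A.mulVec z with hw
  have h1 : |f w| ≤ |f 0| + L * Real.sqrt (∑ i, (w i) ^ 2) := by
    have := hlip w 0
    simp only [Pi.zero_apply, sub_zero] at this
    calc |f w| ≤ |f w - f 0| + |f 0| := by
          have := abs_sub_abs_le_abs_sub (f w) (f 0); linarith [abs_sub_abs_le_abs_sub (f w) (f 0)]
      _ ≤ L * Real.sqrt (∑ i, (w i) ^ 2) + |f 0| := by linarith
      _ = |f 0| + L * Real.sqrt (∑ i, (w i) ^ 2) := by ring
  have h2 : Real.sqrt (∑ i, (w i) ^ 2) ≤ ∑ i, |w i| := by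
    rw [show (∑ i, |w i|) = Real.sqrt ((∑ i, |w i|) ^ 2) from
      (Real.sqrt_sq (by positivity)).symm]
    refine Real.sqrt_le_sqrt ?_
    calc ∑ i, (w i) ^ 2 = ∑ i, |w i| ^ 2 := by simp [sq_abs]
      _ ≤ (∑ i, |w i|) ^ 2 := Finset.sum_sq_le_sq_sum_of_nonneg fun i _ => abs_nonneg _
  have h3 : ∀ i, |w i| ≤ |μ i| + ∑ j, |A i j| * |z j| := by
    intro i
    have : w i = μ i + ∑ j, A i j * z j := by
      simp [hw, Matrix.mulVec, dotProduct]
    rw [this]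
    calc |μ i + ∑ j, A i j * z j| ≤ |μ i| + |∑ j, A i j * z j| := abs_add_le _ _
      _ ≤ |μ i| + ∑ j, |A i j * z j| := by
          gcongr; exact Finset.abs_sum_le_sum_abs _ _
      _ = |μ i| + ∑ j, |A i j| * |z j| := by simp [abs_mul]
  calc |f w| ≤ |f 0| + L * Real.sqrt (∑ i, (w i) ^ 2) := h1
    _ ≤ |f 0| + L * ∑ i, |w i| := by gcongr
    _ ≤ |f 0| + L * ∑ i, (|μ i| + ∑ j, |A i j| * |z j|) := by
        gcongr with i hi; exact h3 i
    _ = g z := rfl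

/-- Gaussian smoothing `J(μ, A) = ∫ f(μ + A z) dγⁿ(z)` of a convex `L`-Lipschitz
function `f` is jointly convex in `(μ, A)`. -/
theorem stmt_1 {n : ℕ} (f : (Fin n → ℝ) → ℝ) (L : ℝ) (hL : 0 ≤ L)
    (hconv : ConvexOn ℝ Set.univ f)
    (hlip : ∀ x y : Fin n → ℝ, |f x - f y| ≤ L * Real.sqrt (∑ i, (x i - y i) ^ 2))
    (μ₁ μ₂ : Fin n → ℝ) (A₁ A₂ : Matrix (Fin n) (Fin n) ℝ)
    (l : ℝ) (hl0 : 0 ≤ l) (hl1 : l ≤ 1) :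
    (∫ z, f ((l • μ₁ + (1 - l) • μ₂) + (l • A₁ + (1 - l) • A₂).mulVec z)
        ∂(Measure.pi fun _ : Fin n => gaussianReal 0 1)) ≤
      l * (∫ z, f (μ₁ + A₁.mulVec z) ∂(Measure.pi fun _ : Fin n => gaussianReal 0 1)) +
        (1 - l) * (∫ z, f (μ₂ + A₂.mulVec z) ∂(Measure.pi fun _ : Fin n => gaussianReal 0 1)) := by
  set γ : Measure (Fin n → ℝ) := Measure.pi fun _ : Fin n => gaussianReal 0 1 with hγ
  have hint0 : Integrable (fun z => f ((l • μ₁ + (1 - l) • μ₂)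
      + (l • A₁ + (1 - l) • A₂).mulVec z)) γ :=
    aux_integrable f L hL hlip _ _
  have hint1 : Integrable (fun z => f (μ₁ + A₁.mulVec z)) γ :=
    aux_integrable f L hL hlip _ _
  have hint2 : Integrable (fun z => f (μ₂ + A₂.mulVec z)) γ :=
    aux_integrable f L hL hlip _ _
  have hpt : ∀ z, f ((l • μ₁ + (1 - l) • μ₂) + (l • A₁ + (1 - l) • A₂).mulVec z)
      ≤ l * f (μ₁ + A₁.mulVec z) + (1 - l) * f (μ₂ + A₂.mulVec z) := by
    intro z
    have harg : (l • μ₁ + (1 - l) • μ₂) + (l • A₁ + (1 - l) • A₂).mulVec z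
        = l • (μ₁ + A₁.mulVec z) + (1 - l) • (μ₂ + A₂.mulVec z) := by
      rw [Matrix.add_mulVec, Matrix.smul_mulVec, Matrix.smul_mulVec]
      module
    rw [harg]
    have := hconv.2 (Set.mem_univ (μ₁ + A₁.mulVec z)) (Set.mem_univ (μ₂ + A₂.mulVec z))
      hl0 (by linarith : (0:ℝ) ≤ 1 - l) (by ring : l + (1 - l) = 1)
    simpa using this
  calc (∫ z, f ((l • μ₁ + (1 - l) • μ₂) + (l • A₁ + (1 - l) • A₂).mulVec z) ∂γ)
      ≤ ∫ z, l * f (μ₁ + A₁.mulVec z) + (1 - l) * f (μ₂ + A₂.mulVec z) ∂γ := by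
        refine integral_mono hint0 ?_ hpt
        exact (hint1.const_mul l).add (hint2.const_mul (1 - l))
    _ = l * (∫ z, f (μ₁ + A₁.mulVec z) ∂γ) + (1 - l) * (∫ z, f (μ₂ + A₂.mulVec z) ∂γ) := by
        rw [integral_add (hint1.const_mul l) (hint2.const_mul (1 - l)),
          integral_const_mul, integral_const_mul]
end

section
/- Let f : ℝⁿ → ℝ be L-Lipschitz, let A be an n×n real matrix, and let μ ∈ ℝⁿ. Then |∫ (‖z‖₂² − n)·(f(μ + A z) − f(μ)) dγⁿ(z)| ≤ √2 · L · ‖A‖₂ · n. -/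
open Matrix MeasureTheory ProbabilityTheory
open scoped Matrix.Norms.L2Operator
open Real
open scoped ENNReal NNReal

lemma aux_integrable_pow_gauss (k : ℕ) :
    Integrable (fun x : ℝ => x ^ k * Real.exp (-(1/2) * x ^ 2)) := by
  have hg : Integrable (fun x : ℝ =>
      ((k.factorial : ℝ) * Real.exp 1) * Real.exp (-(1/4) * x ^ 2)) :=
    (integrable_exp_neg_mul_sq (by norm_num)).const_mul _
  refine hg.mono' ?_ (ae_of_all _ fun x => ?_)
  · exact ((continuous_pow k).mul (by fun_prop)).aestronglyMeasurable
  · have h1 : |x| ^ k ≤ (k.factorial : ℝ) * Real.exp |x| := by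
      have := Real.pow_div_factorial_le_exp |x| (abs_nonneg x) k
      have hk : (0:ℝ) < k.factorial := by positivity
      calc |x| ^ k = |x| ^ k / k.factorial * k.factorial := by field_simp
        _ ≤ Real.exp |x| * k.factorial := by
            apply mul_le_mul_of_nonneg_right this hk.le
        _ = _ := by ring
    have h2 : Real.exp |x| * Real.exp (-(1/2) * x ^ 2) ≤
        Real.exp 1 * Real.exp (-(1/4) * x ^ 2) := by
      rw [← Real.exp_add, ← Real.exp_add]
      apply Real.exp_le_exp.2
      nlinarith [sq_nonneg (|x| - 2), sq_abs x]
    have hexp : (0:ℝ) < Real.exp (-(1/2) * x ^ 2) := Real.exp_pos _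
    calc ‖x ^ k * Real.exp (-(1/2) * x ^ 2)‖
        = |x| ^ k * Real.exp (-(1/2) * x ^ 2) := by
          rw [norm_mul, norm_pow]
          simp [abs_of_pos hexp, Real.norm_eq_abs]
      _ ≤ ((k.factorial : ℝ) * Real.exp |x|) * Real.exp (-(1/2) * x ^ 2) := by
          apply mul_le_mul_of_nonneg_right h1 hexp.le
      _ = (k.factorial : ℝ) * (Real.exp |x| * Real.exp (-(1/2) * x ^ 2)) := by ring
      _ ≤ (k.factorial : ℝ) * (Real.exp 1 * Real.exp (-(1/4) * x ^ 2)) := by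
          apply mul_le_mul_of_nonneg_left h2 (by positivity)
      _ = _ := by ring

lemma aux_rec (k : ℕ) :
    ∫ x : ℝ, x ^ (k+2) * Real.exp (-(1/2) * x ^ 2) =
      (k+1 : ℝ) * ∫ x : ℝ, x ^ k * Real.exp (-(1/2) * x ^ 2) := by
  have hu : ∀ x : ℝ, HasDerivAt (fun x : ℝ => x ^ (k+1)) ((k+1 : ℝ) * x ^ k) x := by
    intro x; simpa using hasDerivAt_pow (k+1) x
  have hv : ∀ x : ℝ, HasDerivAt (fun x : ℝ => -Real.exp (-(1/2) * x ^ 2))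
      (x * Real.exp (-(1/2) * x ^ 2)) x := by
    intro x
    have h1 : HasDerivAt (fun x : ℝ => -(1/2) * x ^ 2) (-(1/2) * (2 * x ^ 1)) x :=
      (hasDerivAt_pow 2 x).const_mul _
    have h2 := h1.exp.fun_neg
    exact h2.congr_deriv (by ring)
  have h := MeasureTheory.integral_mul_deriv_eq_deriv_mul_of_integrable (fun x _ => hu x) (fun x _ => hv x)
    (by
      have := aux_integrable_pow_gauss (k+2)
      apply this.congr
      filter_upwards with x
      show x ^ (k+2) * _ = x ^ (k+1) * (x * _)
      ring)
    (by
      have := (aux_integrable_pow_gauss k).const_mul ((k+1 : ℝ))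
      apply (this.neg).congr
      filter_upwards with x
      show -((k+1:ℝ) * (x ^ k * _)) = (k+1:ℝ) * x ^ k * (-_)
      ring)
    (by
      have := aux_integrable_pow_gauss (k+1)
      apply (this.neg).congr
      filter_upwards with x
      show -(x ^ (k+1) * _) = x ^ (k+1) * (-_)
      ring)
  calc ∫ x : ℝ, x ^ (k+2) * Real.exp (-(1/2) * x ^ 2)
      = ∫ x : ℝ, x ^ (k+1) * (x * Real.exp (-(1/2) * x ^ 2)) := by
        congr 1; funext x; ring
    _ = - ∫ x : ℝ, (k+1 : ℝ) * x ^ k * (-Real.exp (-(1/2) * x ^ 2)) := h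
    _ = (k+1 : ℝ) * ∫ x : ℝ, x ^ k * Real.exp (-(1/2) * x ^ 2) := by
        rw [← integral_neg, ← integral_const_mul]
        congr 1; funext x; ring

lemma aux_I0 : ∫ x : ℝ, x ^ 0 * Real.exp (-(1/2) * x ^ 2) = Real.sqrt (2 * π) := by
  simp only [pow_zero, one_mul]
  have := integral_gaussian (1/2)
  rw [show π / (1/2 : ℝ) = 2 * π by ring] at this
  simpa using this

lemma aux_I2 : ∫ x : ℝ, x ^ 2 * Real.exp (-(1/2) * x ^ 2) = Real.sqrt (2 * π) := by
  have := aux_rec 0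
  rw [aux_I0] at this
  simpa using this

lemma aux_I4 : ∫ x : ℝ, x ^ 4 * Real.exp (-(1/2) * x ^ 2) = 3 * Real.sqrt (2 * π) := by
  have := aux_rec 2
  rw [aux_I2] at this
  norm_num at this ⊢
  linarith


lemma aux_pdf (x : ℝ) : gaussianPDFReal 0 1 x
    = (Real.sqrt (2 * π))⁻¹ * Real.exp (-(1/2) * x ^ 2) := by
  rw [gaussianPDFReal]
  congr 1
  · norm_num
  · congr 1
    push_cast
    ring

lemma aux_gauss_eq : gaussianReal 0 1
    = volume.withDensity (fun x => ((gaussianPDFReal 0 1 x).toNNReal : ℝ≥0∞)) := by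
  rw [gaussianReal_of_var_ne_zero 0 one_ne_zero]
  rfl

lemma aux_meas : Measurable (fun x => (gaussianPDFReal 0 1 x).toNNReal) :=
  (measurable_gaussianPDFReal 0 1).real_toNNReal

lemma aux_smul_eq (g : ℝ → ℝ) (x : ℝ) :
    (gaussianPDFReal 0 1 x).toNNReal • g x
      = (Real.sqrt (2 * π))⁻¹ * (g x * Real.exp (-(1/2) * x ^ 2)) := by
  rw [NNReal.smul_def, Real.coe_toNNReal _ (gaussianPDFReal_nonneg 0 1 x), aux_pdf,
    smul_eq_mul]
  ring

lemma aux_integral_gauss (g : ℝ → ℝ) :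
    ∫ x, g x ∂(gaussianReal 0 1)
      = (Real.sqrt (2 * π))⁻¹ * ∫ x, g x * Real.exp (-(1/2) * x ^ 2) := by
  rw [aux_gauss_eq, integral_withDensity_eq_integral_smul aux_meas, ← integral_const_mul]
  congr 1; funext x
  exact aux_smul_eq g x

lemma aux_integrable_gauss_pow (k : ℕ) :
    Integrable (fun x : ℝ => x ^ k) (gaussianReal 0 1) := by
  rw [aux_gauss_eq, integrable_withDensity_iff_integrable_smul aux_meas]
  have := (aux_integrable_pow_gauss k).const_mul (Real.sqrt (2 * π))⁻¹
  apply this.congr'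
  · exact (aux_meas.coe_nnreal_real.mul
      (measurable_id.pow_const k)).aestronglyMeasurable
  · filter_upwards with x
    rw [aux_smul_eq (fun x => x ^ k) x]

lemma aux_sqrt_ne : Real.sqrt (2 * π) ≠ 0 := by positivity

lemma aux_m2 : ∫ x, x ^ 2 ∂(gaussianReal 0 1) = 1 := by
  rw [aux_integral_gauss, aux_I2, inv_mul_cancel₀ aux_sqrt_ne]

lemma aux_m4 : ∫ x, x ^ 4 ∂(gaussianReal 0 1) = 3 := by
  rw [aux_integral_gauss, aux_I4]
  field_simp

lemma aux_integrable_sq_sub_one :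
    Integrable (fun x : ℝ => x ^ 2 - 1) (gaussianReal 0 1) :=
  (aux_integrable_gauss_pow 2).sub (integrable_const 1)

lemma aux_m_sq_sub_one : ∫ x, (x ^ 2 - 1) ∂(gaussianReal 0 1) = 0 := by
  rw [integral_sub (aux_integrable_gauss_pow 2) (integrable_const 1), aux_m2]
  simp

lemma aux_integrable_sq_sub_one_sq :
    Integrable (fun x : ℝ => (x ^ 2 - 1) ^ 2) (gaussianReal 0 1) := by
  have : (fun x : ℝ => (x ^ 2 - 1) ^ 2)
      = fun x : ℝ => x ^ 4 - 2 * x ^ 2 + 1 := by funext x; ring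
  rw [this]
  exact ((aux_integrable_gauss_pow 4).sub
    ((aux_integrable_gauss_pow 2).const_mul 2)).add (integrable_const 1)

lemma aux_m_sq_sub_one_sq : ∫ x, (x ^ 2 - 1) ^ 2 ∂(gaussianReal 0 1) = 2 := by
  have : (fun x : ℝ => (x ^ 2 - 1) ^ 2)
      = fun x : ℝ => x ^ 4 - 2 * x ^ 2 + 1 := by funext x; ring
  have h1 : Integrable (fun x : ℝ => x ^ 4 - 2 * x ^ 2) (gaussianReal 0 1) :=
    (aux_integrable_gauss_pow 4).sub ((aux_integrable_gauss_pow 2).const_mul 2)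
  have h2 : Integrable (fun _ : ℝ => (1:ℝ)) (gaussianReal 0 1) := integrable_const 1
  rw [this, integral_add h1 h2,
    integral_sub (aux_integrable_gauss_pow 4) ((aux_integrable_gauss_pow 2).const_mul 2),
    integral_const_mul, aux_m2, aux_m4]
  norm_num


section
variable {n : ℕ}

lemma aux_prod_one (g : ℝ → ℝ) (i : Fin n) (z : Fin n → ℝ) :
    ∏ l, (if l = i then g (z l) else 1) = g (z i) := by
  rw [Finset.prod_ite_eq' Finset.univ i (fun l => g (z l))]
  simp

lemma aux_prod_two (g h : ℝ → ℝ) {i j : Fin n} (hij : i ≠ j) (z : Fin n → ℝ) :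
    ∏ l, (if l = i then g (z l) else if l = j then h (z l) else 1) = g (z i) * h (z j) := by
  rw [← Finset.mul_prod_erase Finset.univ _ (Finset.mem_univ i), if_pos rfl]
  have h1 : ∀ l ∈ Finset.univ.erase i,
      (if l = i then g (z l) else if l = j then h (z l) else 1)
        = if l = j then h (z l) else 1 := fun l hl => by
    rw [if_neg (Finset.ne_of_mem_erase hl)]
  rw [Finset.prod_congr rfl h1,
    Finset.prod_ite_eq' (Finset.univ.erase i) j (fun l => h (z l))]
  simp [Finset.mem_erase, hij.symm]

lemma aux_coord_integrable (g : ℝ → ℝ) (hg : Integrable g (gaussianReal 0 1)) (i : Fin n) :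
    Integrable (fun z : Fin n → ℝ => g (z i))
      (Measure.pi fun _ : Fin n => gaussianReal 0 1) := by
  letI : MeasureSpace ℝ := ⟨gaussianReal 0 1⟩
  haveI : IsProbabilityMeasure (volume : Measure ℝ) :=
    inferInstanceAs (IsProbabilityMeasure (gaussianReal 0 1))
  haveI : SigmaFinite (volume : Measure ℝ) :=
    inferInstanceAs (SigmaFinite (gaussianReal 0 1))
  have key := Integrable.fintype_prod (𝕜 := ℝ) (E := ℝ) (μ := fun _ => gaussianReal 0 1)
    (f := fun l x => if l = i then g x else 1)
    (fun l => by
      by_cases h : l = i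
      · subst h; simp only [if_pos rfl]; exact hg
      · simp only [if_neg h]; exact integrable_const 1)
  have hv : (volume : Measure (Fin n → ℝ)) = Measure.pi fun _ : Fin n => gaussianReal 0 1 := rfl
  apply key.congr
  filter_upwards with z
  exact aux_prod_one g i z

lemma aux_coord_integral (g : ℝ → ℝ) (i : Fin n) :
    ∫ z : Fin n → ℝ, g (z i) ∂(Measure.pi fun _ : Fin n => gaussianReal 0 1)
      = ∫ x, g x ∂(gaussianReal 0 1) := by
  letI : MeasureSpace ℝ := ⟨gaussianReal 0 1⟩
  haveI : IsProbabilityMeasure (volume : Measure ℝ) :=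
    inferInstanceAs (IsProbabilityMeasure (gaussianReal 0 1))
  haveI : SigmaFinite (volume : Measure ℝ) :=
    inferInstanceAs (SigmaFinite (gaussianReal 0 1))
  have key := MeasureTheory.integral_fintype_prod_volume_eq_prod (𝕜 := ℝ) (ι := Fin n)
    (fun l (x : ℝ) => if l = i then g x else 1)
  have hv : (volume : Measure (Fin n → ℝ)) = Measure.pi fun _ : Fin n => gaussianReal 0 1 := rfl
  rw [hv] at key
  have h1 : ∀ z : Fin n → ℝ, ∏ l, (if l = i then g (z l) else 1) = g (z i) := aux_prod_one g i
  simp only [h1] at key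
  rw [key]
  have h2 : ∀ l : Fin n, (∫ x : ℝ, if l = i then g x else 1)
      = if l = i then ∫ x, g x ∂(gaussianReal 0 1) else 1 := by
    intro l
    by_cases h : l = i
    · simp only [h, if_pos rfl]; rfl
    · simp only [h, if_neg h]
      have hr : (volume : Measure ℝ) = gaussianReal 0 1 := rfl
      rw [hr]
      simp
  rw [Finset.prod_congr rfl (fun l _ => h2 l),
    Finset.prod_ite_eq' Finset.univ i (fun _ => ∫ x, g x ∂(gaussianReal 0 1))]
  simp

lemma aux_coord2_integrable (g h : ℝ → ℝ) (hg : Integrable g (gaussianReal 0 1))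
    (hh : Integrable h (gaussianReal 0 1)) {i j : Fin n} (hij : i ≠ j) :
    Integrable (fun z : Fin n → ℝ => g (z i) * h (z j))
      (Measure.pi fun _ : Fin n => gaussianReal 0 1) := by
  letI : MeasureSpace ℝ := ⟨gaussianReal 0 1⟩
  haveI : IsProbabilityMeasure (volume : Measure ℝ) :=
    inferInstanceAs (IsProbabilityMeasure (gaussianReal 0 1))
  haveI : SigmaFinite (volume : Measure ℝ) :=
    inferInstanceAs (SigmaFinite (gaussianReal 0 1))
  have key := Integrable.fintype_prod (𝕜 := ℝ) (E := ℝ) (μ := fun _ => gaussianReal 0 1)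
    (f := fun l x => if l = i then g x else if l = j then h x else 1)
    (fun l => by
      by_cases h1 : l = i
      · subst h1; simp only [if_pos rfl]; exact hg
      · by_cases h2 : l = j
        · subst h2; simp only [if_neg h1, if_pos rfl]; exact hh
        · simp only [if_neg h1, if_neg h2]; exact integrable_const 1)
  have hv : (volume : Measure (Fin n → ℝ)) = Measure.pi fun _ : Fin n => gaussianReal 0 1 := rfl
  apply key.congr
  filter_upwards with z
  exact aux_prod_two g h hij z

lemma aux_coord2_integral (g h : ℝ → ℝ) {i j : Fin n} (hij : i ≠ j) :
    ∫ z : Fin n → ℝ, g (z i) * h (z j) ∂(Measure.pi fun _ : Fin n => gaussianReal 0 1)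
      = (∫ x, g x ∂(gaussianReal 0 1)) * ∫ x, h x ∂(gaussianReal 0 1) := by
  letI : MeasureSpace ℝ := ⟨gaussianReal 0 1⟩
  haveI : IsProbabilityMeasure (volume : Measure ℝ) :=
    inferInstanceAs (IsProbabilityMeasure (gaussianReal 0 1))
  haveI : SigmaFinite (volume : Measure ℝ) :=
    inferInstanceAs (SigmaFinite (gaussianReal 0 1))
  have key := MeasureTheory.integral_fintype_prod_volume_eq_prod (𝕜 := ℝ) (ι := Fin n)
    (fun l (x : ℝ) => if l = i then g x else if l = j then h x else 1)
  have hv : (volume : Measure (Fin n → ℝ)) = Measure.pi fun _ : Fin n => gaussianReal 0 1 := rfl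
  rw [hv] at key
  have h1 : ∀ z : Fin n → ℝ,
      ∏ l, (if l = i then g (z l) else if l = j then h (z l) else 1)
        = g (z i) * h (z j) := aux_prod_two g h hij
  simp only [h1] at key
  rw [key]
  have h2 : ∀ l : Fin n, (∫ x : ℝ, if l = i then g x else if l = j then h x else 1)
      = if l = i then ∫ x, g x ∂(gaussianReal 0 1)
        else if l = j then ∫ x, h x ∂(gaussianReal 0 1) else 1 := by
    intro l
    by_cases hi : l = i
    · subst hi; simp only [if_pos rfl]; rfl
    · by_cases hj : l = j
      · subst hj; simp only [if_neg hi, if_pos rfl]; rfl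
      · simp only [if_neg hi, if_neg hj]
        have hr : (volume : Measure ℝ) = gaussianReal 0 1 := rfl
        rw [hr]
        simp
  rw [Finset.prod_congr rfl (fun l _ => h2 l)]
  exact aux_prod_two (fun _ => ∫ x, g x ∂(gaussianReal 0 1))
    (fun _ => ∫ x, h x ∂(gaussianReal 0 1)) hij (fun _ => 0)

end


section
variable {n : ℕ}

local notation "P" => Measure.pi fun _ : Fin n => gaussianReal 0 1

lemma aux_Y_integrable :
    Integrable (fun z : Fin n → ℝ => ∑ i, z i ^ 2) P :=
  integrable_finset_sum _ fun i _ =>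
    aux_coord_integrable (fun x => x ^ 2) (aux_integrable_gauss_pow 2) i

lemma aux_Y_integral : ∫ z : Fin n → ℝ, (∑ i, z i ^ 2) ∂P = n := by
  rw [integral_finset_sum _ fun i _ =>
    aux_coord_integrable (fun x => x ^ 2) (aux_integrable_gauss_pow 2) i]
  simp only [aux_coord_integral (fun x => x ^ 2), aux_m2]
  simp

lemma aux_T_integrable (i j : Fin n) :
    Integrable (fun z : Fin n → ℝ => (z i ^ 2 - 1) * (z j ^ 2 - 1)) P := by
  by_cases h : i = j
  · subst h
    have := aux_coord_integrable (fun x => (x ^ 2 - 1) * (x ^ 2 - 1))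
      (aux_integrable_sq_sub_one_sq.congr
        (by filter_upwards with x; ring)) i
    exact this
  · exact aux_coord2_integrable _ _ aux_integrable_sq_sub_one aux_integrable_sq_sub_one h

lemma aux_T_integral (i j : Fin n) :
    ∫ z : Fin n → ℝ, (z i ^ 2 - 1) * (z j ^ 2 - 1) ∂P = if i = j then 2 else 0 := by
  by_cases h : i = j
  · subst h
    rw [if_pos rfl, aux_coord_integral (fun x => (x ^ 2 - 1) * (x ^ 2 - 1)) i]
    rw [show (fun x : ℝ => (x ^ 2 - 1) * (x ^ 2 - 1)) = fun x : ℝ => (x ^ 2 - 1) ^ 2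
      from by funext x; ring]
    exact aux_m_sq_sub_one_sq
  · rw [if_neg h]
    have h2 := aux_coord2_integral (fun x => x ^ 2 - 1) (fun x => x ^ 2 - 1) h
    rw [aux_m_sq_sub_one, zero_mul] at h2
    exact h2

lemma aux_X_eq (z : Fin n → ℝ) :
    ((∑ i, z i ^ 2) - (n : ℝ)) ^ 2 = ∑ i, ∑ j, (z i ^ 2 - 1) * (z j ^ 2 - 1) := by
  have h1 : (∑ i, z i ^ 2) - (n : ℝ) = ∑ i, (z i ^ 2 - 1) := by
    rw [Finset.sum_sub_distrib]
    simp
  rw [h1, sq, Finset.sum_mul_sum]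

lemma aux_X2_integrable :
    Integrable (fun z : Fin n → ℝ => ((∑ i, z i ^ 2) - (n : ℝ)) ^ 2) P := by
  have : (fun z : Fin n → ℝ => ((∑ i, z i ^ 2) - (n : ℝ)) ^ 2)
      = fun z => ∑ i, ∑ j, (z i ^ 2 - 1) * (z j ^ 2 - 1) := by
    funext z; exact aux_X_eq z
  rw [this]
  exact integrable_finset_sum _ fun i _ =>
    integrable_finset_sum _ fun j _ => aux_T_integrable i j

lemma aux_X2_integral :
    ∫ z : Fin n → ℝ, ((∑ i, z i ^ 2) - (n : ℝ)) ^ 2 ∂P = 2 * n := by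
  have h1 : (fun z : Fin n → ℝ => ((∑ i, z i ^ 2) - (n : ℝ)) ^ 2)
      = fun z => ∑ i, ∑ j, (z i ^ 2 - 1) * (z j ^ 2 - 1) := by
    funext z; exact aux_X_eq z
  rw [h1, integral_finset_sum _ fun i _ =>
    integrable_finset_sum _ fun j _ => aux_T_integrable i j]
  have h2 : ∀ i : Fin n, ∫ z : Fin n → ℝ, (∑ j, (z i ^ 2 - 1) * (z j ^ 2 - 1)) ∂P = 2 := by
    intro i
    rw [integral_finset_sum _ fun j _ => aux_T_integrable i j]
    simp only [aux_T_integral]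
    rw [Finset.sum_ite_eq Finset.univ i fun _ => (2:ℝ)]
    simp
  rw [Finset.sum_congr rfl fun i _ => h2 i]
  simp [mul_comm]

end

/-- For `L`-Lipschitz `f`, matrix `A`, and `μ ∈ ℝⁿ`,
`|∫ (‖z‖₂² − n)(f(μ + A z) − f(μ)) dγⁿ(z)| ≤ √2 L ‖A‖₂ n` with `‖A‖₂` the spectral norm. -/
theorem stmt_10 {n : ℕ} (f : (Fin n → ℝ) → ℝ) (L : ℝ) (hL : 0 ≤ L)
    (hlip : ∀ x y : Fin n → ℝ, |f x - f y| ≤ L * Real.sqrt (∑ i, (x i - y i) ^ 2))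
    (A : Matrix (Fin n) (Fin n) ℝ) (μ : Fin n → ℝ) :
    |∫ z, ((∑ i, z i ^ 2) - n) * (f (μ + A.mulVec z) - f μ)
        ∂(Measure.pi fun _ : Fin n => gaussianReal 0 1)| ≤
      Real.sqrt 2 * L * ‖A‖ * n := by
  set P := Measure.pi fun _ : Fin n => gaussianReal 0 1 with hP
  have hlipA : ∀ z : Fin n → ℝ, |f (μ + A.mulVec z) - f μ|
      ≤ L * ‖A‖ * Real.sqrt (∑ i, z i ^ 2) := by
    intro z
    have h0 := hlip (μ + A.mulVec z) μ
    simp only [Pi.add_apply, add_sub_cancel_left] at h0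
    refine h0.trans ?_
    rw [mul_assoc]
    refine mul_le_mul_of_nonneg_left ?_ hL
    -- √(∑ (A z) i ^2) ≤ ‖A‖ * √(∑ z i ^2)
    set x : EuclideanSpace ℝ (Fin n) := (EuclideanSpace.equiv (Fin n) ℝ).symm z with hx
    have kb := Matrix.l2_opNorm_mulVec A x
    have e1 : ‖(EuclideanSpace.equiv (Fin n) ℝ).symm (A.mulVec x)‖
        = Real.sqrt (∑ i, (A.mulVec z) i ^ 2) := by
      rw [EuclideanSpace.norm_eq]
      congr 1
      refine Finset.sum_congr rfl fun i _ => ?_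
      rw [Real.norm_eq_abs, sq_abs]
      rfl
    have e2 : ‖x‖ = Real.sqrt (∑ i, z i ^ 2) := by
      rw [EuclideanSpace.norm_eq]
      congr 1
      refine Finset.sum_congr rfl fun i _ => ?_
      rw [Real.norm_eq_abs, sq_abs]
      rfl
    rw [e1, e2] at kb
    exact kb
  have hGint : Integrable (fun z : Fin n → ℝ => (L * ‖A‖) *
      (Real.sqrt 2 / 4 * (((∑ i, z i ^ 2) - (n : ℝ)) ^ 2)
        + Real.sqrt 2 / 2 * ∑ i, z i ^ 2)) P :=
    ((aux_X2_integrable.const_mul (Real.sqrt 2 / 4)).add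
      (aux_Y_integrable.const_mul (Real.sqrt 2 / 2))).const_mul _
  have hpt : ∀ z : Fin n → ℝ,
      |((∑ i, z i ^ 2) - (n : ℝ)) * (f (μ + A.mulVec z) - f μ)|
        ≤ (L * ‖A‖) * (Real.sqrt 2 / 4 * (((∑ i, z i ^ 2) - (n : ℝ)) ^ 2)
          + Real.sqrt 2 / 2 * ∑ i, z i ^ 2) := by
    intro z
    set X := (∑ i, z i ^ 2) - (n : ℝ) with hX
    set Y := Real.sqrt (∑ i, z i ^ 2) with hY
    have hYnn : 0 ≤ Y := Real.sqrt_nonneg _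
    have hY2 : Y ^ 2 = ∑ i, z i ^ 2 := Real.sq_sqrt (by positivity)
    have hCnn : 0 ≤ L * ‖A‖ := mul_nonneg hL (norm_nonneg _)
    have step1 : |X * (f (μ + A.mulVec z) - f μ)| ≤ |X| * (L * ‖A‖ * Y) := by
      rw [abs_mul]
      exact mul_le_mul_of_nonneg_left (hlipA z) (abs_nonneg _)
    refine step1.trans ?_
    have core : |X| * Y ≤ Real.sqrt 2 / 4 * X ^ 2 + Real.sqrt 2 / 2 * Y ^ 2 := by
      have hs2 : Real.sqrt 2 ^ 2 = 2 := Real.sq_sqrt (by norm_num)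
      have hsn : 0 ≤ Real.sqrt 2 := Real.sqrt_nonneg 2
      have key : Real.sqrt 2 / 4 * X ^ 2 + Real.sqrt 2 / 2 * Y ^ 2 - |X| * Y
          = Real.sqrt 2 / 4 * (|X| - Real.sqrt 2 * Y) ^ 2 := by
        linear_combination (-(Real.sqrt 2 / 4)) * (sq_abs X)
          + (|X| * Y / 2 - Real.sqrt 2 * Y ^ 2 / 4) * hs2
      have hnn : 0 ≤ Real.sqrt 2 / 4 * (|X| - Real.sqrt 2 * Y) ^ 2 := by positivity
      linarith
    calc |X| * (L * ‖A‖ * Y) = (L * ‖A‖) * (|X| * Y) := by ring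
      _ ≤ (L * ‖A‖) * (Real.sqrt 2 / 4 * X ^ 2 + Real.sqrt 2 / 2 * Y ^ 2) :=
          mul_le_mul_of_nonneg_left core hCnn
      _ = (L * ‖A‖) * (Real.sqrt 2 / 4 * X ^ 2 + Real.sqrt 2 / 2 * ∑ i, z i ^ 2) := by
          rw [hY2]
  calc |∫ z, ((∑ i, z i ^ 2) - (n:ℝ)) * (f (μ + A.mulVec z) - f μ) ∂P|
      ≤ ∫ z, |((∑ i, z i ^ 2) - (n:ℝ)) * (f (μ + A.mulVec z) - f μ)| ∂P := by
        simpa only [Real.norm_eq_abs] using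
          norm_integral_le_integral_norm
            (f := fun z : Fin n → ℝ =>
              ((∑ i, z i ^ 2) - (n:ℝ)) * (f (μ + A.mulVec z) - f μ)) (μ := P)
    _ ≤ ∫ z, (L * ‖A‖) * (Real.sqrt 2 / 4 * (((∑ i, z i ^ 2) - (n : ℝ)) ^ 2)
          + Real.sqrt 2 / 2 * ∑ i, z i ^ 2) ∂P :=
        integral_mono_of_nonneg (ae_of_all _ fun z => abs_nonneg _) hGint
          (ae_of_all _ hpt)
    _ = Real.sqrt 2 * L * ‖A‖ * n := by
        rw [integral_const_mul, integral_add (aux_X2_integrable.const_mul _)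
          (aux_Y_integrable.const_mul _), integral_const_mul, integral_const_mul,
          aux_X2_integral, aux_Y_integral]
        ring
end

section
/- Let Σ be a real positive definite n×n matrix, let β > 0 and γ ≥ 0 be reals, let ĝ, μ, μ* ∈ ℝⁿ, and define μ' := μ − β·Σ·(γμ + ĝ). Then ‖μ' − μ*‖²_{Σ⁻¹} ≤ ‖μ − μ*‖²_{Σ⁻¹} − 2β⟨ĝ, μ − μ*⟩ − βγ(‖μ − μ*‖₂² − ‖μ*‖₂² + ‖μ‖₂²) + 2β²·⟨ĝ, Σ ĝ⟩ + 2β²γ²·⟨μ, Σ μ⟩. -/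
open Matrix

/-- One-step descent inequality for the regularized mean update
`μ' = μ − β Σ (γ μ + ĝ)` of the CASBO algorithm: with positive definite `Σ`,
`‖μ' − μ*‖²_{Σ⁻¹} ≤ ‖μ − μ*‖²_{Σ⁻¹} − 2β⟨ĝ, μ − μ*⟩ − βγ(‖μ − μ*‖₂² − ‖μ*‖₂² + ‖μ‖₂²)
  + 2β²⟨ĝ, Σ ĝ⟩ + 2β²γ²⟨μ, Σ μ⟩`. -/
theorem stmt_14 {n : ℕ} (S : Matrix (Fin n) (Fin n) ℝ) (hS : S.PosDef)
    (β γ : ℝ) (hβ : 0 < β) (hγ : 0 ≤ γ) (g μ μs : Fin n → ℝ) :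
    (μ - β • S.mulVec (γ • μ + g) - μs) ⬝ᵥ S⁻¹.mulVec (μ - β • S.mulVec (γ • μ + g) - μs) ≤
      (μ - μs) ⬝ᵥ S⁻¹.mulVec (μ - μs) - 2 * β * (g ⬝ᵥ (μ - μs)) -
        β * γ * ((∑ i, (μ i - μs i) ^ 2) - (∑ i, μs i ^ 2) + ∑ i, μ i ^ 2) +
        2 * β ^ 2 * (g ⬝ᵥ S.mulVec g) + 2 * β ^ 2 * γ ^ 2 * (μ ⬝ᵥ S.mulVec μ) := by
  have hdet : IsUnit S.det := isUnit_iff_ne_zero.mpr hS.det_pos.ne'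
  have hinv : S⁻¹ * S = 1 := Matrix.nonsing_inv_mul S hdet
  have hsymm : S⁻¹ᵀ = S⁻¹ := (hS.inv.isHermitian).eq
  have hSsymm : Sᵀ = S := hS.isHermitian.eq
  have hSinvS : ∀ v : Fin n → ℝ, S⁻¹.mulVec (S.mulVec v) = v := by
    intro v
    rw [Matrix.mulVec_mulVec, hinv, Matrix.one_mulVec]
  have hcross : ∀ v w : Fin n → ℝ, (S.mulVec v) ⬝ᵥ S⁻¹.mulVec w = v ⬝ᵥ w := by
    intro v w
    rw [Matrix.dotProduct_mulVec, ← Matrix.mulVec_transpose, hsymm, hSinvS]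
  have hcomm : ∀ v w : Fin n → ℝ, v ⬝ᵥ S.mulVec w = w ⬝ᵥ S.mulVec v := by
    intro v w
    rw [Matrix.dotProduct_mulVec, ← Matrix.mulVec_transpose, hSsymm,
      dotProduct_comm]
  -- sum identity : ∑(μ-μs)² - ∑μs² + ∑μ² = 2 μ⬝(μ-μs)
  have hsum : (∑ i, (μ i - μs i) ^ 2) - (∑ i, μs i ^ 2) + ∑ i, μ i ^ 2
      = 2 * (μ ⬝ᵥ (μ - μs)) := by
    simp only [dotProduct, Pi.sub_apply, Finset.mul_sum,
      ← Finset.sum_sub_distrib, ← Finset.sum_add_distrib]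
    apply Finset.sum_congr rfl
    intro i _
    ring
  -- PSD inequality
  have hpsd : 0 ≤ (γ • μ - g) ⬝ᵥ S.mulVec (γ • μ - g) := by
    simpa using hS.posSemidef.dotProduct_mulVec_nonneg (γ • μ - g)
  -- expand everything
  have hflip : ∀ v w : Fin n → ℝ, (S.mulVec v) ⬝ᵥ w = w ⬝ᵥ S.mulVec v :=
    fun v w => dotProduct_comm _ _
  have hicomm : ∀ v w : Fin n → ℝ, v ⬝ᵥ S⁻¹.mulVec w = w ⬝ᵥ S⁻¹.mulVec v := by
    intro v w
    rw [Matrix.dotProduct_mulVec, ← Matrix.mulVec_transpose, hsymm,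
      dotProduct_comm]
  rw [hsum]
  simp only [Matrix.mulVec_add, Matrix.mulVec_sub, Matrix.mulVec_smul,
    add_dotProduct, sub_dotProduct, smul_dotProduct,
    dotProduct_add, dotProduct_sub, dotProduct_smul,
    smul_eq_mul, hSinvS, hcross, hflip] at hpsd ⊢
  simp only [hcomm g μ, dotProduct_comm μs μ, dotProduct_comm g μ,
    dotProduct_comm μs g] at hpsd ⊢
  linarith [mul_nonneg (sq_nonneg β) hpsd]
end

section
/- Let Σ be a real positive definite n×n matrix and let H be a real symmetric n×n matrix. Let α_t, β_t, β_{t+1}, γ_t, ω_t be positive reals, and suppose H ≼ (1/α_t)·(β_{t+1}/β_t − ω_t)·I + (β_{t+1}·γ_t/α_t)·Σ. Define the updated inverse covariance M := Σ^{−1/2}·(ω_t·I + α_t·H)·Σ^{−1/2}, where Σ^{−1/2} is the inverse of the symmetric positive definite square root of Σ. Then (1/β_{t+1})·M − (1/β_t)·Σ⁻¹ − γ_t·I ≼ 0. -/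
open Matrix

open scoped ComplexOrder

/-- The square root of a positive semidefinite matrix, as `Matrix.PosSemidef.sqrt` was defined
in the older Mathlib. -/
noncomputable def posSemidefSqrtOld {n 𝕜 : Type*} [Fintype n] [RCLike 𝕜] [DecidableEq n]
    {A : Matrix n n 𝕜} (hA : A.PosSemidef) : Matrix n n 𝕜 :=
  hA.1.eigenvectorUnitary.1 * diagonal ((↑) ∘ (Real.sqrt ∘ hA.1.eigenvalues)) *
    (star hA.1.eigenvectorUnitary : Matrix n n 𝕜)

/-- If `Σ` is positive definite, `H` is symmetric, and
`H ≼ (1/α_t)(β_{t+1}/β_t − ω_t) I + (β_{t+1}γ_t/α_t) Σ`, then the updated inverse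
covariance `M = Σ^{−1/2}(ω_t I + α_t H)Σ^{−1/2}` (with `Σ^{1/2}` the symmetric positive
definite square root of `Σ`) satisfies `(1/β_{t+1}) M − (1/β_t) Σ⁻¹ − γ_t I ≼ 0`. -/
theorem stmt_16 {n : ℕ} (S H : Matrix (Fin n) (Fin n) ℝ) (hS : S.PosDef) (hH : H.IsSymm)
    (αt βt βt1 γt ωt : ℝ)
    (hαt : 0 < αt) (hβt : 0 < βt) (hβt1 : 0 < βt1) (hγt : 0 < γt) (hωt : 0 < ωt)
    (hcon : ((1 / αt * (βt1 / βt - ωt)) • (1 : Matrix (Fin n) (Fin n) ℝ) +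
        (βt1 * γt / αt) • S - H).PosSemidef) :
    ((1 / βt) • S⁻¹ + γt • (1 : Matrix (Fin n) (Fin n) ℝ) -
        (1 / βt1) • ((posSemidefSqrtOld hS.posSemidef)⁻¹ *
          (ωt • (1 : Matrix (Fin n) (Fin n) ℝ) + αt • H) * (posSemidefSqrtOld hS.posSemidef)⁻¹)).PosSemidef := by
  set sq := posSemidefSqrtOld hS.posSemidef with hsqdef
  have hsq_sym : sq.IsHermitian := by
    have hD : (diagonal ((↑) ∘ (Real.sqrt ∘ hS.posSemidef.1.eigenvalues)) :
        Matrix (Fin n) (Fin n) ℝ).PosSemidef := by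
      rw [posSemidef_diagonal_iff]
      intro i
      exact Real.sqrt_nonneg _
    have := hD.mul_mul_conjTranspose_same (hS.posSemidef.1.eigenvectorUnitary : Matrix (Fin n) (Fin n) ℝ)
    rw [hsqdef, posSemidefSqrtOld, star_eq_conjTranspose]
    exact this.1
  have hmul : sq * sq = S := by
    rw [hsqdef, posSemidefSqrtOld]
    conv_rhs => rw [hS.posSemidef.1.spectral_theorem, Unitary.conjStarAlgAut_apply]
    have hU : (star hS.posSemidef.1.eigenvectorUnitary : Matrix (Fin n) (Fin n) ℝ) *
        (hS.posSemidef.1.eigenvectorUnitary : Matrix (Fin n) (Fin n) ℝ) = 1 :=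
      Unitary.coe_star_mul_self _
    have hDD : (diagonal (RCLike.ofReal ∘ (Real.sqrt ∘ hS.posSemidef.1.eigenvalues)) :
        Matrix (Fin n) (Fin n) ℝ) * diagonal (RCLike.ofReal ∘ (Real.sqrt ∘ hS.posSemidef.1.eigenvalues)) =
        diagonal (RCLike.ofReal ∘ hS.posSemidef.1.eigenvalues) := by
      rw [diagonal_mul_diagonal]
      congr 1
      funext i
      simp only [Function.comp_apply]
      exact Real.mul_self_sqrt (hS.posSemidef.eigenvalues_nonneg i)
    simp only [Matrix.mul_assoc]
    rw [← Matrix.mul_assoc (star _ : Matrix (Fin n) (Fin n) ℝ), hU, Matrix.one_mul,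
      ← Matrix.mul_assoc _ _ (star _ : Matrix (Fin n) (Fin n) ℝ), hDD]
  have hdet : sq.det ≠ 0 := by
    intro h
    have : S.det = 0 := by rw [← hmul, det_mul, h, mul_zero]
    exact hS.det_pos.ne' this
  set R := sq⁻¹ with hRdef
  have hR_sym : R.IsHermitian := hsq_sym.inv
  have hRsq : R * sq = 1 := nonsing_inv_mul sq (Ne.isUnit hdet)
  have hsqR : sq * R = 1 := mul_nonsing_inv sq (Ne.isUnit hdet)
  have hRR : R * R = S⁻¹ := by
    rw [← Matrix.mul_inv_rev, hmul]
  have hRSR : R * S * R = 1 := by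
    rw [← hmul, ← Matrix.mul_assoc, Matrix.mul_assoc R sq sq, ← Matrix.mul_assoc R,
      hRsq, Matrix.one_mul, hsqR]
  -- the inner matrix
  set C : Matrix (Fin n) (Fin n) ℝ := (1 / αt * (βt1 / βt - ωt)) • (1 : Matrix (Fin n) (Fin n) ℝ) +
      (βt1 * γt / αt) • S - H with hCdef
  have hN : ((αt / βt1) • C).PosSemidef := by
    refine ⟨?_, fun x => ?_⟩
    · show ((αt / βt1) • C)ᴴ = _
      rw [conjTranspose_smul, hcon.1.eq, star_trivial]
    · exact (hcon.smul (a := αt / βt1) (by positivity)).2 x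
  have key : (1 / βt) • S⁻¹ + γt • (1 : Matrix (Fin n) (Fin n) ℝ) -
      (1 / βt1) • (R * (ωt • (1 : Matrix (Fin n) (Fin n) ℝ) + αt • H) * R)
      = R * ((αt / βt1) • C) * R := by
    have hinner : (αt / βt1) • C = (1 / βt) • (1 : Matrix (Fin n) (Fin n) ℝ) + γt • S -
        (1 / βt1) • (ωt • (1 : Matrix (Fin n) (Fin n) ℝ) + αt • H) := by
      rw [hCdef]
      match_scalars <;> field_simp <;> ring
    rw [hinner]
    simp only [Matrix.mul_sub, Matrix.sub_mul, Matrix.mul_add, Matrix.add_mul,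
      Matrix.mul_smul, Matrix.smul_mul, hRR, hRSR, Matrix.mul_one]
  rw [key]
  have := hN.conjTranspose_mul_mul_same R
  rwa [hR_sym.eq] at this
end
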